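/- Let M be a topological space, let E, F, G be finite-dimensional inner product spaces over 𝕜 ∈ {ℝ, ℂ}, and let e : M → (G →L[𝕜] E) and d : M → (E →L[𝕜] F) be continuous families of linear maps. Suppose (x_n)_{n∈ℕ} is a sequence in M converging to x ∈ M, (V_n)_{n∈ℕ} is a sequence of subspaces of E with range(e(x_n)) ≤ V_n ≤ ker(d(x_n)) for every n, and V is a subspace of E with ‖P_{V_n} − P_V‖ → 0. Then range(e(x)) ≤ V ≤ ker(d(x)). -/

import Mathlib

open FiniteDimensional Filter

/-- The orthogonal projection onto a subspace `V` of a finite-dimensional inner product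
space, regarded as a continuous linear endomorphism. -/
noncomputable def orthProjection {𝕜 E : Type*} [RCLike 𝕜] [NormedAddCommGroup E]
    [InnerProductSpace 𝕜 E] [FiniteDimensional 𝕜 E] (V : Submodule 𝕜 E) : E →L[𝕜] E :=
  V.subtypeL.comp (Submodule.orthogonalProjectionOnto V)

lemma orthProjection_mem {𝕜 E : Type*} [RCLike 𝕜] [NormedAddCommGroup E]
    [InnerProductSpace 𝕜 E] [FiniteDimensional 𝕜 E] (V : Submodule 𝕜 E) (v : E) :
    orthProjection V v ∈ V := (Submodule.orthogonalProjectionOnto V v).2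

lemma orthProjection_eq_self {𝕜 E : Type*} [RCLike 𝕜] [NormedAddCommGroup E]
    [InnerProductSpace 𝕜 E] [FiniteDimensional 𝕜 E] (V : Submodule 𝕜 E) {v : E}
    (hv : v ∈ V) : orthProjection V v = v := by
  exact congrArg Subtype.val (V.orthogonalProjectionOnto_mem_subspace_eq_self ⟨v, hv⟩)

/-- If `range (e (x n)) ≤ V n ≤ ker (d (x n))` along a sequence `x n → x` and the
subspaces `V n` converge to `V` in the gap metric, then `range (e x) ≤ V ≤ ker (d x)`. -/
theorem range_le_gap_limit_le_ker {𝕜 E F G M : Type*} [RCLike 𝕜]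
    [NormedAddCommGroup E] [InnerProductSpace 𝕜 E] [FiniteDimensional 𝕜 E]
    [NormedAddCommGroup F] [InnerProductSpace 𝕜 F] [FiniteDimensional 𝕜 F]
    [NormedAddCommGroup G] [InnerProductSpace 𝕜 G] [FiniteDimensional 𝕜 G]
    [TopologicalSpace M]
    (e : M → (G →L[𝕜] E)) (he : Continuous e)
    (d : M → (E →L[𝕜] F)) (hd : Continuous d)
    (x : M) (xs : ℕ → M) (hxs : Tendsto xs atTop (nhds x))
    (Vs : ℕ → Submodule 𝕜 E)
    (hVs : ∀ n, LinearMap.range (e (xs n) : G →ₗ[𝕜] E) ≤ Vs n ∧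
      Vs n ≤ LinearMap.ker (d (xs n) : E →ₗ[𝕜] F))
    (V : Submodule 𝕜 E)
    (hconv : Tendsto (fun n => ‖orthProjection (Vs n) - orthProjection V‖) atTop (nhds 0)) :
    LinearMap.range (e x : G →ₗ[𝕜] E) ≤ V ∧ V ≤ LinearMap.ker (d x : E →ₗ[𝕜] F) := by
  have hP : Tendsto (fun n => orthProjection (Vs n)) atTop (nhds (orthProjection V)) :=
    tendsto_iff_norm_sub_tendsto_zero.mpr hconv
  have hxe : Tendsto (fun n => e (xs n)) atTop (nhds (e x)) := (he.tendsto x).comp hxs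
  have hxd : Tendsto (fun n => d (xs n)) atTop (nhds (d x)) := (hd.tendsto x).comp hxs
  have hc1 : Tendsto (fun n => (orthProjection (Vs n)).comp (e (xs n))) atTop
      (nhds ((orthProjection V).comp (e x))) :=
    ((isBoundedBilinearMap_comp (𝕜 := 𝕜)).continuous.tendsto _).comp (hP.prodMk_nhds hxe)
  have hc2 : Tendsto (fun n => (d (xs n)).comp (orthProjection (Vs n))) atTop
      (nhds ((d x).comp (orthProjection V))) :=
    ((isBoundedBilinearMap_comp (𝕜 := 𝕜)).continuous.tendsto _).comp (hxd.prodMk_nhds hP)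
  have heq1 : (orthProjection V).comp (e x) = e x := by
    refine tendsto_nhds_unique ?_ hxe
    convert hc1 using 2 with n
    ext g
    exact (orthProjection_eq_self (Vs n) ((hVs n).1 (LinearMap.mem_range_self _ g))).symm
  have heq2 : (d x).comp (orthProjection V) = 0 := by
    refine tendsto_nhds_unique hc2 ?_
    have h0 : ∀ n, (d (xs n)).comp (orthProjection (Vs n)) = 0 := by
      intro n
      ext v
      simpa using (hVs n).2 (orthProjection_mem (Vs n) v)
    simp only [h0]
    exact tendsto_const_nhds
  constructor
  · rintro _ ⟨g, rfl⟩
    have h1 : orthProjection V (e x g) = e x g := ContinuousLinearMap.ext_iff.mp heq1 g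
    show e x g ∈ V
    rw [← h1]
    exact orthProjection_mem V _
  · intro v hv
    have : d x (orthProjection V v) = 0 := by
      have := congrArg (fun f => f v) heq2
      simpa using this
    rw [orthProjection_eq_self V hv] at this
    exact this
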